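/- Suppose an infinite sequence of pairs of runs (ρ^1_i, ρ^2_i) of a d-VASS is given where all ρ^1_i have the same source s and target configurations q(v_i), and all ρ^2_i have source q(v_i) and the same target t. Then there exist indices i < j such that ρ^1_i ⊴ ρ^1_j (embedding matching targets) and ρ^2_i ⊴' ρ^2_j (embedding matching sources), and consequently v_j − v_i ∈ ℕ^d and for every n ∈ ℕ there are runs s ⟶ q(v_i + n(v_j − v_i)) ⟶ t. -/

import Mathlib

/-- A configuration of a `d`-VASS with states `Q`. -/
abbrev Conf (Q : Type) (d : ℕ) := Q × (Fin d → ℕ)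

/-- A transition of a `d`-VASS with states `Q`. -/
abbrev VTrans (Q : Type) (d : ℕ) := Q × (Fin d → ℤ) × Q

/-- An anchored transition: a transition together with its source and target configurations. -/
abbrev AncTrans (Q : Type) (d : ℕ) := Conf Q d × VTrans Q d × Conf Q d

/-- Validity of an anchored transition with respect to the transition set `T`. -/
def ValidAnc {Q : Type} {d : ℕ} (T : Set (VTrans Q d)) (m : AncTrans Q d) : Prop :=
  m.2.1 ∈ T ∧ m.1.1 = m.2.1.1 ∧ m.2.2.1 = m.2.1.2.2 ∧
  ∀ i, (m.2.2.2 i : ℤ) = (m.1.2 i : ℤ) + m.2.1.2.1 i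

/-- A run: a nonempty sequence of consecutive valid anchored transitions. -/
structure Run (Q : Type) (d : ℕ) (T : Set (VTrans Q d)) where
  len : ℕ
  pos : 0 < len
  m : Fin len → AncTrans Q d
  valid : ∀ i, ValidAnc T (m i)
  chain : ∀ (i : Fin len) (h : i.1 + 1 < len), (m i).2.2 = (m ⟨i.1 + 1, h⟩).1

/-- The source configuration of a run. -/
def Run.src {Q : Type} {d : ℕ} {T : Set (VTrans Q d)} (ρ : Run Q d T) : Conf Q d :=
  (ρ.m ⟨0, ρ.pos⟩).1

/-- The target configuration of a run. -/
def Run.trg {Q : Type} {d : ℕ} {T : Set (VTrans Q d)} (ρ : Run Q d T) : Conf Q d :=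
  (ρ.m ⟨ρ.len - 1, by have := ρ.pos; omega⟩).2.2

/-- Componentwise order on configurations (equal states). -/
def ConfLe {Q : Type} {d : ℕ} (c c' : Conf Q d) : Prop := c.1 = c'.1 ∧ c.2 ≤ c'.2

/-- Domination order on anchored transitions: equal transitions, dominated configurations. -/
def AncLe {Q : Type} {d : ℕ} (m m' : AncTrans Q d) : Prop :=
  m.2.1 = m'.2.1 ∧ ConfLe m.1 m'.1 ∧ ConfLe m.2.2 m'.2.2

/-- The embedding order `⊴` on runs: the anchored transitions of `ρ` embed into those
of `ρ'`, with the last anchored transition of `ρ` matched to the last one of `ρ'`. -/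
def RunEmbed {Q : Type} {d : ℕ} {T : Set (VTrans Q d)} (ρ ρ' : Run Q d T) : Prop :=
  ∃ f : Fin ρ.len → Fin ρ'.len, StrictMono f ∧
    (f ⟨ρ.len - 1, by have := ρ.pos; omega⟩).1 = ρ'.len - 1 ∧
    ∀ j, AncLe (ρ.m j) (ρ'.m (f j))

/-- The variant `⊴'` of the embedding order matching the first anchored transitions. -/
def RunEmbed' {Q : Type} {d : ℕ} {T : Set (VTrans Q d)} (ρ ρ' : Run Q d T) : Prop :=
  ∃ f : Fin ρ.len → Fin ρ'.len, StrictMono f ∧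
    (f ⟨0, ρ.pos⟩).1 = 0 ∧
    ∀ j, AncLe (ρ.m j) (ρ'.m (f j))

/-- One step of a VASS with transition set `T`. -/
def Step {Q : Type} {d : ℕ} (T : Set (VTrans Q d)) (c c' : Conf Q d) : Prop :=
  ∃ t ∈ T, c.1 = t.1 ∧ c'.1 = t.2.2 ∧ ∀ i, (c'.2 i : ℤ) = (c.2 i : ℤ) + t.2.1 i

/-- Reachability in a VASS with transition set `T`. -/
def Reach {Q : Type} {d : ℕ} (T : Set (VTrans Q d)) : Conf Q d → Conf Q d → Prop :=
  Relation.ReflTransGen (Step T)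

/-- Adding a nonnegative vector to a configuration. -/
def confAdd {Q : Type} {d : ℕ} (c : Conf Q d) (δ : Fin d → ℕ) : Conf Q d :=
  (c.1, c.2 + δ)

section Aux

variable {Q : Type} {d : ℕ} {T : Set (VTrans Q d)}

theorem Reach.refl (c : Conf Q d) : Reach T c c := Relation.ReflTransGen.refl

theorem Reach.tail {a b c : Conf Q d} (h : Reach T a b) (h' : Step T b c) : Reach T a c :=
  Relation.ReflTransGen.tail h h'

theorem Reach.trans {a b c : Conf Q d} (h : Reach T a b) (h' : Reach T b c) : Reach T a c :=
  Relation.ReflTransGen.trans h h'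

theorem confAdd_confAdd (c : Conf Q d) (a b : Fin d → ℕ) :
    confAdd (confAdd c a) b = confAdd c (a + b) := by
  simp [confAdd, add_assoc]

theorem confAdd_zero (c : Conf Q d) : confAdd c 0 = c := by simp [confAdd]

theorem step_add {c c' : Conf Q d} (h : Step T c c') (z : Fin d → ℕ) :
    Step T (confAdd c z) (confAdd c' z) := by
  obtain ⟨tr, hmem, h1, h2, h3⟩ := h
  refine ⟨tr, hmem, h1, h2, fun i => ?_⟩
  have := h3 i
  simp only [confAdd, Pi.add_apply]
  push_cast
  omega

theorem reach_add {c c' : Conf Q d} (h : Reach T c c') (z : Fin d → ℕ) :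
    Reach T (confAdd c z) (confAdd c' z) := by
  induction h with
  | refl => exact Reach.refl _
  | tail _ hstep ih => exact ih.tail (step_add hstep z)

theorem reach_pump {c : Conf Q d} {a b : Fin d → ℕ}
    (h : Reach T (confAdd c a) (confAdd c b)) (n : ℕ) :
    Reach T (confAdd c (n • a)) (confAdd c (n • b)) := by
  induction n with
  | zero => rw [zero_smul, zero_smul]; exact Reach.refl _
  | succ n ih =>
    have e1 : confAdd c ((n + 1) • a) = confAdd (confAdd c a) (n • a) := by
      rw [confAdd_confAdd]; congr 1; rw [succ_nsmul, add_comm]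
    have e2 : confAdd (confAdd c b) (n • a) = confAdd (confAdd c (n • a)) b := by
      rw [confAdd_confAdd, confAdd_confAdd, add_comm]
    have e3 : confAdd (confAdd c (n • b)) b = confAdd c ((n + 1) • b) := by
      rw [confAdd_confAdd, ← succ_nsmul]
    rw [e1, ← e3]
    exact ((reach_add h (n • a)).trans (e2 ▸ reach_add ih b))

theorem Run.step_at (ρ : Run Q d T) (l : Fin ρ.len) : Step T (ρ.m l).1 (ρ.m l).2.2 := by
  obtain ⟨hmem, h1, h2, h3⟩ := ρ.valid l
  exact ⟨(ρ.m l).2.1, hmem, h1, h2, h3⟩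

theorem Run.reach_src_src (ρ : Run Q d T) :
    ∀ (b a : ℕ) (ha : a < ρ.len) (hb : b < ρ.len), a ≤ b →
      Reach T (ρ.m ⟨a, ha⟩).1 (ρ.m ⟨b, hb⟩).1 := by
  intro b
  induction b with
  | zero =>
    intro a ha hb hab
    have : a = 0 := by omega
    subst this
    exact Reach.refl _
  | succ b ih =>
    intro a ha hb hab
    rcases Nat.eq_or_lt_of_le hab with h | h
    · subst h; exact Reach.refl _
    · have hb' : b < ρ.len := by omega
      have step1 : Reach T (ρ.m ⟨a, ha⟩).1 (ρ.m ⟨b, hb'⟩).1 := ih a ha hb' (by omega)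
      have hch : (ρ.m ⟨b, hb'⟩).2.2 = (ρ.m ⟨b + 1, hb⟩).1 := ρ.chain ⟨b, hb'⟩ hb
      exact step1.tail (hch ▸ ρ.step_at ⟨b, hb'⟩)

theorem Run.reach_trg_src (ρ : Run Q d T) (a b : ℕ) (ha : a < ρ.len) (hb : b < ρ.len)
    (hab : a < b) : Reach T (ρ.m ⟨a, ha⟩).2.2 (ρ.m ⟨b, hb⟩).1 := by
  have ha1 : a + 1 < ρ.len := by omega
  have hch : (ρ.m ⟨a, ha⟩).2.2 = (ρ.m ⟨a + 1, ha1⟩).1 := ρ.chain ⟨a, ha⟩ ha1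
  rw [hch]
  exact ρ.reach_src_src b (a + 1) ha1 hb (by omega)

theorem Run.reach_trg_trg (ρ : Run Q d T) (a b : ℕ) (ha : a < ρ.len) (hb : b < ρ.len)
    (hab : a ≤ b) : Reach T (ρ.m ⟨a, ha⟩).2.2 (ρ.m ⟨b, hb⟩).2.2 := by
  rcases Nat.eq_or_lt_of_le hab with h | h
  · subst h; exact Reach.refl _
  · exact (ρ.reach_trg_src a b ha hb h).tail (ρ.step_at _)

theorem anc_gap {m m' : AncTrans Q d} (hv : ValidAnc T m) (hv' : ValidAnc T m')
    (h : AncLe m m') :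
    m'.1 = confAdd m.1 (fun x => m'.1.2 x - m.1.2 x) ∧
    m'.2.2 = confAdd m.2.2 (fun x => m'.1.2 x - m.1.2 x) := by
  obtain ⟨htr, ⟨hq1, hle1⟩, ⟨hq2, _⟩⟩ := h
  constructor
  · refine Prod.ext hq1.symm (funext fun x => ?_)
    have hx : m.1.2 x ≤ m'.1.2 x := hle1 x
    show m'.1.2 x = m.1.2 x + (m'.1.2 x - m.1.2 x)
    omega
  · refine Prod.ext hq2.symm (funext fun x => ?_)
    have h1 := hv.2.2.2 x
    have h2 := hv'.2.2.2 x
    rw [← htr] at h2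
    have hx : m.1.2 x ≤ m'.1.2 x := hle1 x
    show m'.2.2.2 x = m.2.2.2 x + (m'.1.2 x - m.1.2 x)
    omega

theorem runEmbed_trg_le {ρ ρ' : Run Q d T} (h : RunEmbed ρ ρ') : ConfLe ρ.trg ρ'.trg := by
  obtain ⟨f, hmono, hlast, hanc⟩ := h
  have hfl : f ⟨ρ.len - 1, by have := ρ.pos; omega⟩ =
      ⟨ρ'.len - 1, by have := ρ'.pos; omega⟩ := Fin.ext hlast
  have h2 := (hanc ⟨ρ.len - 1, by have := ρ.pos; omega⟩).2.2
  have e := congrArg (fun z => (ρ'.m z).2.2) hfl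
  exact ⟨h2.1.trans (congrArg Prod.fst e), le_trans h2.2 (le_of_eq (congrArg Prod.snd e))⟩

theorem runEmbed'_src_le {ρ ρ' : Run Q d T} (h : RunEmbed' ρ ρ') : ConfLe ρ.src ρ'.src := by
  obtain ⟨f, hmono, hfirst, hanc⟩ := h
  have hfl : f ⟨0, ρ.pos⟩ = ⟨0, ρ'.pos⟩ := Fin.ext hfirst
  have h2 := (hanc ⟨0, ρ.pos⟩).2.1
  have e := congrArg (fun z => (ρ'.m z).1) hfl
  exact ⟨h2.1.trans (congrArg Prod.fst e), le_trans h2.2 (le_of_eq (congrArg Prod.snd e))⟩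

theorem pump1 (ρ ρ' : Run Q d T) (h : RunEmbed ρ ρ') (hs : ρ.src = ρ'.src) (n : ℕ) :
    Reach T ρ.src (confAdd ρ.trg (n • fun x => ρ'.trg.2 x - ρ.trg.2 x)) := by
  obtain ⟨f, hmono, hlast, hanc⟩ := h
  set g : Fin ρ.len → (Fin d → ℕ) :=
    fun l x => (ρ'.m (f l)).1.2 x - (ρ.m l).1.2 x with hg
  have hgap : ∀ l, (ρ'.m (f l)).1 = confAdd (ρ.m l).1 (g l) ∧
      (ρ'.m (f l)).2.2 = confAdd (ρ.m l).2.2 (g l) :=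
    fun l => anc_gap (ρ.valid l) (ρ'.valid (f l)) (hanc l)
  have main : ∀ (l : ℕ) (hl : l < ρ.len),
      Reach T ρ.src (confAdd (ρ.m ⟨l, hl⟩).2.2 (n • g ⟨l, hl⟩)) := by
    intro l
    induction l with
    | zero =>
      intro hl
      have hb : Reach T (confAdd (ρ.m ⟨0, hl⟩).1 0) (confAdd (ρ.m ⟨0, hl⟩).1 (g ⟨0, hl⟩)) := by
        rw [confAdd_zero, ← (hgap ⟨0, hl⟩).1]
        have hss : (ρ.m ⟨0, hl⟩).1 = (ρ'.m ⟨0, ρ'.pos⟩).1 := hs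
        rw [hss]
        exact ρ'.reach_src_src (f ⟨0, hl⟩).1 0 ρ'.pos (f ⟨0, hl⟩).2 (Nat.zero_le _)
      have hp := reach_pump hb n
      rw [smul_zero, confAdd_zero] at hp
      exact hp.tail (step_add (ρ.step_at ⟨0, hl⟩) _)
    | succ l ih =>
      intro hl
      have hl' : l < ρ.len := by omega
      have hch : (ρ.m ⟨l, hl'⟩).2.2 = (ρ.m ⟨l + 1, hl⟩).1 := ρ.chain ⟨l, hl'⟩ hl
      have hseg : Reach T (confAdd (ρ.m ⟨l + 1, hl⟩).1 (g ⟨l, hl'⟩))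
          (confAdd (ρ.m ⟨l + 1, hl⟩).1 (g ⟨l + 1, hl⟩)) := by
        rw [← hch, ← (hgap ⟨l, hl'⟩).2, hch, ← (hgap ⟨l + 1, hl⟩).1]
        exact ρ'.reach_trg_src _ _ (f ⟨l, hl'⟩).2 (f ⟨l + 1, hl⟩).2
          (hmono (Fin.mk_lt_mk.2 (Nat.lt_succ_self l)))
      have ihh := ih hl'
      rw [hch] at ihh
      exact (ihh.trans (reach_pump hseg n)).tail (step_add (ρ.step_at ⟨l + 1, hl⟩) _)
  have hρl : ρ.len - 1 < ρ.len := by have := ρ.pos; omega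
  have hfin := main (ρ.len - 1) hρl
  have hfl : f ⟨ρ.len - 1, hρl⟩ = ⟨ρ'.len - 1, by have := ρ'.pos; omega⟩ := Fin.ext hlast
  have key : ∀ x, ρ'.trg.2 x = ρ.trg.2 x + g ⟨ρ.len - 1, hρl⟩ x := by
    intro x
    have e := congrArg (fun z => (ρ'.m z).2.2.2 x) hfl
    have h2 := congrArg (fun c => c.2 x) (hgap ⟨ρ.len - 1, hρl⟩).2
    exact e.symm.trans h2
  have hδ : (fun x => ρ'.trg.2 x - ρ.trg.2 x) = g ⟨ρ.len - 1, hρl⟩ := by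
    funext x
    have := key x
    omega
  rw [hδ]
  exact hfin

theorem pump2 (ρ ρ' : Run Q d T) (h : RunEmbed' ρ ρ') (ht : ρ.trg = ρ'.trg) (n : ℕ) :
    Reach T (confAdd ρ.src (n • fun x => ρ'.src.2 x - ρ.src.2 x)) ρ.trg := by
  obtain ⟨f, hmono, hfirst, hanc⟩ := h
  set g : Fin ρ.len → (Fin d → ℕ) :=
    fun l x => (ρ'.m (f l)).1.2 x - (ρ.m l).1.2 x with hg
  have hgap : ∀ l, (ρ'.m (f l)).1 = confAdd (ρ.m l).1 (g l) ∧
      (ρ'.m (f l)).2.2 = confAdd (ρ.m l).2.2 (g l) :=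
    fun l => anc_gap (ρ.valid l) (ρ'.valid (f l)) (hanc l)
  have hρl : ρ.len - 1 < ρ.len := by have := ρ.pos; omega
  have hρ'l : ρ'.len - 1 < ρ'.len := by have := ρ'.pos; omega
  have main : ∀ (c l : ℕ) (hl : l < ρ.len), ρ.len - 1 - l ≤ c →
      Reach T (confAdd (ρ.m ⟨l, hl⟩).1 (n • g ⟨l, hl⟩)) ρ.trg := by
    intro c
    induction c with
    | zero =>
      intro l hl hc
      have hll : l = ρ.len - 1 := by omega
      subst hll
      have hfinseg : Reach T (confAdd ρ.trg (g ⟨ρ.len - 1, hl⟩)) (confAdd ρ.trg 0) := by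
        rw [confAdd_zero]
        have e : confAdd ρ.trg (g ⟨ρ.len - 1, hl⟩) = (ρ'.m (f ⟨ρ.len - 1, hl⟩)).2.2 :=
          ((hgap ⟨ρ.len - 1, hl⟩).2).symm
        rw [e, ht]
        exact ρ'.reach_trg_trg (f ⟨ρ.len - 1, hl⟩).1 (ρ'.len - 1)
          (f ⟨ρ.len - 1, hl⟩).2 hρ'l (by have := (f ⟨ρ.len - 1, hl⟩).2; omega)
      have hp := reach_pump hfinseg n
      rw [smul_zero, confAdd_zero] at hp
      exact ((Reach.refl _).tail (step_add (ρ.step_at ⟨ρ.len - 1, hl⟩) (n • g ⟨ρ.len - 1, hl⟩))).trans hp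
    | succ c ihc =>
      intro l hl hc
      rcases le_or_gt (ρ.len - 1 - l) c with hle | hgt
      · exact ihc l hl hle
      · have hl1 : l + 1 < ρ.len := by omega
        have hch : (ρ.m ⟨l, hl⟩).2.2 = (ρ.m ⟨l + 1, hl1⟩).1 := ρ.chain ⟨l, hl⟩ hl1
        have hseg : Reach T (confAdd (ρ.m ⟨l + 1, hl1⟩).1 (g ⟨l, hl⟩))
            (confAdd (ρ.m ⟨l + 1, hl1⟩).1 (g ⟨l + 1, hl1⟩)) := by
          rw [← hch, ← (hgap ⟨l, hl⟩).2, hch, ← (hgap ⟨l + 1, hl1⟩).1]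
          exact ρ'.reach_trg_src _ _ (f ⟨l, hl⟩).2 (f ⟨l + 1, hl1⟩).2
            (hmono (Fin.mk_lt_mk.2 (Nat.lt_succ_self l)))
        have htail := ihc (l + 1) hl1 (by omega)
        refine ((Reach.refl _).tail (step_add (ρ.step_at ⟨l, hl⟩) (n • g ⟨l, hl⟩))).trans ?_
        rw [hch]
        exact (reach_pump hseg n).trans htail
  have hfin := main ρ.len 0 ρ.pos (by omega)
  have hfl : f ⟨0, ρ.pos⟩ = ⟨0, ρ'.pos⟩ := Fin.ext hfirst
  have key : ∀ x, ρ'.src.2 x = ρ.src.2 x + g ⟨0, ρ.pos⟩ x := by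
    intro x
    have e := congrArg (fun z => (ρ'.m z).1.2 x) hfl
    have h2 := congrArg (fun c => c.2 x) (hgap ⟨0, ρ.pos⟩).1
    exact e.symm.trans h2
  have hδ : (fun x => ρ'.src.2 x - ρ.src.2 x) = g ⟨0, ρ.pos⟩ := by
    funext x
    have := key x
    omega
  rw [hδ]
  exact hfin

end Aux
section WQO

variable {Q : Type} {d : ℕ} {T : Set (VTrans Q d)}

theorem ancLe_refl (m : AncTrans Q d) : AncLe m m :=
  ⟨rfl, ⟨rfl, le_refl _⟩, ⟨rfl, le_refl _⟩⟩

theorem ancLe_trans {a b c : AncTrans Q d} (h : AncLe a b) (h' : AncLe b c) : AncLe a c := by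
  obtain ⟨h1, ⟨h2, h3⟩, ⟨h4, h5⟩⟩ := h
  obtain ⟨g1, ⟨g2, g3⟩, ⟨g4, g5⟩⟩ := h'
  exact ⟨h1.trans g1, ⟨h2.trans g2, h3.trans g3⟩, ⟨h4.trans g4, h5.trans g5⟩⟩

instance : IsRefl (AncTrans Q d) AncLe := ⟨ancLe_refl⟩

instance : IsTrans (AncTrans Q d) AncLe := ⟨fun _ _ _ => ancLe_trans⟩

instance : IsPreorder (AncTrans Q d) AncLe := {}

theorem anc_pwo (hT : T.Finite) :
    {m : AncTrans Q d | ValidAnc T m}.PartiallyWellOrderedOn AncLe := by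
  rw [Set.partiallyWellOrderedOn_iff_exists_lt]
  intro f hf
  haveI : IsRefl (VTrans Q d) (· = ·) := ⟨fun _ => rfl⟩
  haveI : IsTrans (VTrans Q d) (· = ·) := ⟨fun _ _ _ h h' => h.trans h'⟩
  haveI : IsPreorder (VTrans Q d) (· = ·) := {}
  have hTp : T.PartiallyWellOrderedOn (· = ·) := hT.partiallyWellOrderedOn
  have hpi : (Set.univ : Set (Fin d → ℕ)).IsPWO :=
    Set.isPWO_univ_iff.2 inferInstance
  have hprod := hTp.prod hpi
  obtain ⟨i, j, hij, h1, h2⟩ := hprod.exists_lt (f := fun n => ((f n).2.1, (f n).1.2))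
      (fun n => ⟨(hf n).1, Set.mem_univ _⟩)
  refine ⟨i, j, hij, ?_⟩
  have h1 : (f i).2.1 = (f j).2.1 := h1
  have h2 : (f i).1.2 ≤ (f j).1.2 := h2
  have vi := hf i
  have vj := hf j
  simp only [Set.mem_setOf_eq] at vi vj
  refine ⟨h1, ⟨?_, h2⟩, ⟨?_, ?_⟩⟩
  · rw [vi.2.1, vj.2.1, h1]
  · rw [vi.2.2.1, vj.2.2.1, h1]
  · intro x
    have e1 := vi.2.2.2 x
    have e2 := vj.2.2.2 x
    rw [← h1] at e2
    have e3 : (f i).1.2 x ≤ (f j).1.2 x := h2 x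
    show (f i).2.2.2 x ≤ (f j).2.2.2 x
    omega

/-- Last anchored transition of a run. -/
def Run.lastA (ρ : Run Q d T) : AncTrans Q d := ρ.m ⟨ρ.len - 1, by have := ρ.pos; omega⟩

/-- First anchored transition of a run. -/
def Run.headA (ρ : Run Q d T) : AncTrans Q d := ρ.m ⟨0, ρ.pos⟩

/-- The list of all anchored transitions of a run except the last one. -/
def Run.initL (ρ : Run Q d T) : List (AncTrans Q d) :=
  List.ofFn (fun i : Fin (ρ.len - 1) => ρ.m ⟨i.1, by omega⟩)

/-- The list of all anchored transitions of a run except the first one. -/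
def Run.tailL (ρ : Run Q d T) : List (AncTrans Q d) :=
  List.ofFn (fun i : Fin (ρ.len - 1) => ρ.m ⟨i.1 + 1, by omega⟩)

theorem decode1 {ρ ρ' : Run Q d T} (hl : AncLe ρ.lastA ρ'.lastA)
    (hi : List.SublistForall₂ AncLe ρ.initL ρ'.initL) : RunEmbed ρ ρ' := by
  rw [List.sublistForall₂_iff] at hi
  obtain ⟨l, hfor, hsub⟩ := hi
  rw [List.sublist_iff_exists_fin_orderEmbedding_get_eq] at hsub
  obtain ⟨femb, hemb⟩ := hsub
  rw [List.forall₂_iff_get] at hfor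
  obtain ⟨hlen, hget⟩ := hfor
  have hlρ : ρ.initL.length = ρ.len - 1 := by simp [Run.initL]
  have hlρ' : ρ'.initL.length = ρ'.len - 1 := by simp [Run.initL]
  refine ⟨fun i => if h : i.1 < ρ.len - 1 then
      ⟨(femb ⟨i.1, by omega⟩).1, by have h2 := (femb ⟨i.1, by omega⟩).isLt; omega⟩
    else ⟨ρ'.len - 1, by have := ρ'.pos; omega⟩, ?_, ?_, ?_⟩
  · intro a b hab
    have hab' : a.1 < b.1 := hab
    by_cases ha : a.1 < ρ.len - 1 <;> by_cases hb : b.1 < ρ.len - 1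
    · simp only [dif_pos ha, dif_pos hb]
      have hm := femb.strictMono
        (show (⟨a.1, by omega⟩ : Fin l.length) < ⟨b.1, by omega⟩ from hab')
      exact Fin.mk_lt_mk.2 hm
    · simp only [dif_pos ha, dif_neg hb]
      have h2 := (femb ⟨a.1, by omega⟩).isLt
      exact Fin.mk_lt_mk.2 (by omega)
    · exfalso; have := b.isLt; omega
    · exfalso; have := a.isLt; have := b.isLt; omega
  · simp only [dif_neg (show ¬ (ρ.len - 1 < ρ.len - 1) by omega)]
  · intro i
    by_cases h : i.1 < ρ.len - 1
    · simp only [dif_pos h]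
      have hA : i.1 < ρ.initL.length := by omega
      have hB : i.1 < l.length := by omega
      have h1 := hget i.1 hA hB
      have h2 := hemb ⟨i.1, hB⟩
      rw [h2] at h1
      have eA : ρ.initL.get ⟨i.1, hA⟩ = ρ.m i := by
        simp only [Run.initL, List.get_ofFn]
        exact congrArg ρ.m (Fin.ext rfl)
      have eB : ρ'.initL.get (femb ⟨i.1, hB⟩) = ρ'.m
          ⟨(femb ⟨i.1, hB⟩).1, by have := (femb ⟨i.1, hB⟩).isLt; omega⟩ := by
        simp only [Run.initL, List.get_ofFn]
        exact congrArg ρ'.m (Fin.ext rfl)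
      rw [eA, eB] at h1
      exact h1
    · simp only [dif_neg h]
      have hi : i = ⟨ρ.len - 1, by have := ρ.pos; omega⟩ := Fin.ext (show i.1 = ρ.len - 1 by have := i.isLt; omega)
      rw [hi]
      exact hl

theorem decode2 {ρ ρ' : Run Q d T} (hl : AncLe ρ.headA ρ'.headA)
    (hi : List.SublistForall₂ AncLe ρ.tailL ρ'.tailL) : RunEmbed' ρ ρ' := by
  rw [List.sublistForall₂_iff] at hi
  obtain ⟨l, hfor, hsub⟩ := hi
  rw [List.sublist_iff_exists_fin_orderEmbedding_get_eq] at hsub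
  obtain ⟨femb, hemb⟩ := hsub
  rw [List.forall₂_iff_get] at hfor
  obtain ⟨hlen, hget⟩ := hfor
  have hlρ : ρ.tailL.length = ρ.len - 1 := by simp [Run.tailL]
  have hlρ' : ρ'.tailL.length = ρ'.len - 1 := by simp [Run.tailL]
  refine ⟨fun i => if h : 0 < i.1 then
      ⟨(femb ⟨i.1 - 1, by have := i.isLt; omega⟩).1 + 1,
        by have h2 := (femb ⟨i.1 - 1, by have := i.isLt; omega⟩).isLt; omega⟩
    else ⟨0, ρ'.pos⟩, ?_, ?_, ?_⟩
  · intro a b hab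
    have hab' : a.1 < b.1 := hab
    have hb : 0 < b.1 := by omega
    by_cases ha : 0 < a.1
    · simp only [dif_pos ha, dif_pos hb]
      have hm := femb.strictMono
        (show (⟨a.1 - 1, by have := a.isLt; omega⟩ : Fin l.length) <
          ⟨b.1 - 1, by have := b.isLt; omega⟩ from by
            show a.1 - 1 < b.1 - 1; omega)
      have hm' : (femb ⟨a.1 - 1, by have := a.isLt; omega⟩).1 <
          (femb ⟨b.1 - 1, by have := b.isLt; omega⟩).1 := hm
      exact Fin.mk_lt_mk.2 (by omega)
    · simp only [dif_neg ha, dif_pos hb]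
      exact Fin.mk_lt_mk.2 (by omega)
  · simp only [dif_neg (show ¬ (0 : ℕ) < 0 by omega)]
  · intro i
    by_cases h : 0 < i.1
    · simp only [dif_pos h]
      have hA : i.1 - 1 < ρ.tailL.length := by have := i.isLt; omega
      have hB : i.1 - 1 < l.length := by have := i.isLt; omega
      have h1 := hget (i.1 - 1) hA hB
      have h2 := hemb ⟨i.1 - 1, hB⟩
      rw [h2] at h1
      have eA : ρ.tailL.get ⟨i.1 - 1, hA⟩ = ρ.m i := by
        simp only [Run.tailL, List.get_ofFn]
        exact congrArg ρ.m (Fin.ext (by show i.1 - 1 + 1 = i.1; omega))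
      have eB : ρ'.tailL.get (femb ⟨i.1 - 1, hB⟩) = ρ'.m
          ⟨(femb ⟨i.1 - 1, hB⟩).1 + 1, by have := (femb ⟨i.1 - 1, hB⟩).isLt; omega⟩ := by
        simp only [Run.tailL, List.get_ofFn]
        exact congrArg ρ'.m (Fin.ext rfl)
      rw [eA, eB] at h1
      exact h1
    · simp only [dif_neg h]
      have hi : i = ⟨0, ρ.pos⟩ := Fin.ext (show i.1 = 0 by omega)
      rw [hi]
      exact hl

theorem good_pair (hT : T.Finite) (r1 r2 : ℕ → Run Q d T) :
    ∃ i j, i < j ∧ RunEmbed (r1 i) (r1 j) ∧ RunEmbed' (r2 i) (r2 j) := by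
  classical
  have hS := anc_pwo (T := T) hT
  have hL := Set.PartiallyWellOrderedOn.partiallyWellOrderedOn_sublistForall₂ AncLe hS
  have hpair := hS.prod hL
  haveI hR : IsRefl (AncTrans Q d × List (AncTrans Q d))
      (fun x y => AncLe x.1 y.1 ∧ List.SublistForall₂ AncLe x.2 y.2) :=
    ⟨fun a => ⟨ancLe_refl a.1, refl_of (List.SublistForall₂ AncLe) a.2⟩⟩
  haveI hTr : IsTrans (AncTrans Q d × List (AncTrans Q d))
      (fun x y => AncLe x.1 y.1 ∧ List.SublistForall₂ AncLe x.2 y.2) :=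
    ⟨fun a b c h h' => ⟨ancLe_trans h.1 h'.1,
      trans_of (List.SublistForall₂ AncLe) h.2 h'.2⟩⟩
  haveI : IsPreorder (AncTrans Q d × List (AncTrans Q d))
      (fun x y => AncLe x.1 y.1 ∧ List.SublistForall₂ AncLe x.2 y.2) := {}
  have hquad := hpair.prod hpair
  have hmemL : ∀ (ρ : Run Q d T), ρ.initL ∈
      {l : List (AncTrans Q d) | ∀ x, x ∈ l → x ∈ {m | ValidAnc T m}} := by
    intro ρ x hx
    rw [Run.initL, List.mem_ofFn] at hx
    obtain ⟨k, rfl⟩ := hx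
    exact ρ.valid _
  have hmemT : ∀ (ρ : Run Q d T), ρ.tailL ∈
      {l : List (AncTrans Q d) | ∀ x, x ∈ l → x ∈ {m | ValidAnc T m}} := by
    intro ρ x hx
    rw [Run.tailL, List.mem_ofFn] at hx
    obtain ⟨k, rfl⟩ := hx
    exact ρ.valid _
  obtain ⟨i, j, hij, hgood⟩ := hquad.exists_lt
    (f := fun n => (((r1 n).lastA, (r1 n).initL), ((r2 n).headA, (r2 n).tailL)))
    (fun n => ⟨⟨(r1 n).valid _, hmemL _⟩, ⟨(r2 n).valid _, hmemT _⟩⟩)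
  exact ⟨i, j, hij, decode1 hgood.1.1 hgood.1.2, decode2 hgood.2.1 hgood.2.2⟩

end WQO
/-- From an infinite family of runs s ⟶ q(vᵢ) ⟶ t one can extract a dominating pair and
pump: for every n there are runs s ⟶ q(vᵢ + n(vⱼ − vᵢ)) ⟶ t. -/
theorem stmt_15 {Q : Type} {d : ℕ} {T : Set (VTrans Q d)} (hT : T.Finite)
    (s t : Conf Q d) (q : Q) (v : ℕ → (Fin d → ℕ))
    (ρ₁ ρ₂ : ℕ → Run Q d T)
    (hρ₁ : ∀ i, (ρ₁ i).src = s ∧ (ρ₁ i).trg = (q, v i))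
    (hρ₂ : ∀ i, (ρ₂ i).src = (q, v i) ∧ (ρ₂ i).trg = t) :
    ∃ i j : ℕ, i < j ∧ RunEmbed (ρ₁ i) (ρ₁ j) ∧ RunEmbed' (ρ₂ i) (ρ₂ j) ∧
      v i ≤ v j ∧
      ∀ n : ℕ,
        Reach T s (q, fun l => v i l + n * (v j l - v i l)) ∧
        Reach T (q, fun l => v i l + n * (v j l - v i l)) t := by
  obtain ⟨i, j, hij, hE, hE'⟩ := good_pair hT ρ₁ ρ₂
  have hle : v i ≤ v j := by
    have h := runEmbed_trg_le hE
    rw [(hρ₁ i).2, (hρ₁ j).2] at h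
    exact h.2
  refine ⟨i, j, hij, hE, hE', hle, fun n => ⟨?_, ?_⟩⟩
  · have h := pump1 (ρ₁ i) (ρ₁ j) hE (by rw [(hρ₁ i).1, (hρ₁ j).1]) n
    have e : confAdd (ρ₁ i).trg (n • fun x => (ρ₁ j).trg.2 x - (ρ₁ i).trg.2 x) =
        (q, fun l => v i l + n * (v j l - v i l)) := by
      rw [(hρ₁ i).2, (hρ₁ j).2]
      refine Prod.ext rfl (funext fun x => ?_)
      simp only [confAdd, Pi.add_apply, Pi.smul_apply, smul_eq_mul]
    rw [e, (hρ₁ i).1] at h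
    exact h
  · have h := pump2 (ρ₂ i) (ρ₂ j) hE' (by rw [(hρ₂ i).2, (hρ₂ j).2]) n
    have e : confAdd (ρ₂ i).src (n • fun x => (ρ₂ j).src.2 x - (ρ₂ i).src.2 x) =
        (q, fun l => v i l + n * (v j l - v i l)) := by
      rw [(hρ₂ i).1, (hρ₂ j).1]
      refine Prod.ext rfl (funext fun x => ?_)
      simp only [confAdd, Pi.add_apply, Pi.smul_apply, smul_eq_mul]
    rw [e, (hρ₂ i).2] at h
    exact h
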